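/- Let (x^k, y^k, γ^k) be iterates of the two-block linearized ADMM (Algorithm 1): x^{k+1} is a global minimizer of f̄^k, y^{k+1} is a global minimizer of h̄^k, and γ^{k+1} = γ^k + β(Ax^{k+1} + By^{k+1}), under Assumption 1. Then for every k ≥ 1, m_k − m_{k+1} ≥ (C1 − C3 − C_m)‖y^{k+1} − y^k‖² + (C_m − C4)‖y^k − y^{k−1}‖² + (C0 − C2)‖x^{k+1} − x^k‖², where L_w = L_g + L_h, L_A is the largest eigenvalue of AᵀA, λ_{BᵀB} is the smallest eigenvalue of BᵀB, C0 = (L_x − L_g − βL_A)/2, C1 = (2L_y − L_w)/2, C2 = 3L_w²/(βλ_{BᵀB}), C3 = 3L_y²/(βλ_{BᵀB}), C4 = 3(L_w² + L_y²)/(βλ_{BᵀB}), and m_k = L_β(x^k, y^k, γ^k) + C_m‖y^k − y^{k−1}‖² for a constant C_m ∈ ℝ. -/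

import Mathlib

open Matrix Filter
open scoped RealInnerProductSpace

noncomputable section

abbrev Vec (m : ℕ) := EuclideanSpace ℝ (Fin m)

def mv {m l : ℕ} (M : Matrix (Fin m) (Fin l) ℝ) (v : Vec l) : Vec m := WithLp.toLp 2 (M.mulVec v)

def gradx {p q : ℕ} (g : Vec p → Vec q → ℝ) (x : Vec p) (y : Vec q) : Vec p :=
  gradient (fun x' => g x' y) x

def grady {p q : ℕ} (g : Vec p → Vec q → ℝ) (x : Vec p) (y : Vec q) : Vec q :=
  gradient (g x) y

def LipschitzDifferentiable {m : ℕ} (h : Vec m → ℝ) (L : ℝ) : Prop :=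
  Differentiable ℝ h ∧ ∀ y y' : Vec m, ‖gradient h y - gradient h y'‖ ≤ L * ‖y - y'‖

def LipschitzDifferentiable2 {p q : ℕ} (g : Vec p → Vec q → ℝ) (L : ℝ) : Prop :=
  (∀ y, Differentiable ℝ fun x => g x y) ∧ (∀ x, Differentiable ℝ (g x)) ∧
    ∀ x x' : Vec p, ∀ y y' : Vec q,
      Real.sqrt (‖gradx g x y - gradx g x' y'‖ ^ 2 + ‖grady g x y - grady g x' y'‖ ^ 2) ≤
        L * Real.sqrt (‖x - x'‖ ^ 2 + ‖y - y'‖ ^ 2)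

def Lagr {p q n : ℕ} (β : ℝ) (g : Vec p → Vec q → ℝ) (f : Vec p → ℝ) (h : Vec q → ℝ)
    (A : Matrix (Fin n) (Fin p) ℝ) (B : Matrix (Fin n) (Fin q) ℝ)
    (x : Vec p) (y : Vec q) (γ : Vec n) : ℝ :=
  g x y + f x + h y + ⟪γ, mv A x + mv B y⟫ + β / 2 * ‖mv A x + mv B y‖ ^ 2

def fbar {p q n : ℕ} (f : Vec p → ℝ) (g : Vec p → Vec q → ℝ)
    (A : Matrix (Fin n) (Fin p) ℝ) (B : Matrix (Fin n) (Fin q) ℝ) (β Lx : ℝ)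
    (xk : Vec p) (yk : Vec q) (γk : Vec n) (x : Vec p) : ℝ :=
  f x + ⟪γk, mv A x⟫ + Lx / 2 * ‖x - xk‖ ^ 2 +
    ⟪x - xk, gradx g xk yk + β • mv Aᵀ (mv A xk + mv B yk)⟫

def hbar {p q n : ℕ} (g : Vec p → Vec q → ℝ) (h : Vec q → ℝ)
    (A : Matrix (Fin n) (Fin p) ℝ) (B : Matrix (Fin n) (Fin q) ℝ) (β Ly : ℝ)
    (xk1 : Vec p) (yk : Vec q) (γk : Vec n) (y : Vec q) : ℝ :=
  ⟪γk, mv B y⟫ + Ly / 2 * ‖y - yk‖ ^ 2 + β / 2 * ‖mv A xk1 + mv B y‖ ^ 2 +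
    ⟪y - yk, grady g xk1 yk + gradient h yk⟫

def IsSmallestEigenvalue {m : ℕ} (M : Matrix (Fin m) (Fin m) ℝ) (lam : ℝ) : Prop :=
  (∃ v : Fin m → ℝ, v ≠ 0 ∧ M.mulVec v = lam • v) ∧
    ∀ μ : ℝ, (∃ v : Fin m → ℝ, v ≠ 0 ∧ M.mulVec v = μ • v) → lam ≤ μ

def IsLargestEigenvalue {m : ℕ} (M : Matrix (Fin m) (Fin m) ℝ) (lam : ℝ) : Prop :=
  (∃ v : Fin m → ℝ, v ≠ 0 ∧ M.mulVec v = lam • v) ∧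
    ∀ μ : ℝ, (∃ v : Fin m → ℝ, v ≠ 0 ∧ M.mulVec v = μ • v) → μ ≤ lam

def RegularSubgradientAt {m : ℕ} (f : Vec m → ℝ) (x₀ v : Vec m) : Prop :=
  ∀ ε > 0, ∀ᶠ x in nhds x₀, f x₀ + ⟪v, x - x₀⟫ - ε * ‖x - x₀‖ ≤ f x

/-! ### Auxiliary lemmas -/

lemma mv_add {m l : ℕ} (M : Matrix (Fin m) (Fin l) ℝ) (a b : Vec l) :
    mv M (a + b) = mv M a + mv M b := by
  ext i; simp [mv, Matrix.mulVec_add]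

lemma mv_smul {m l : ℕ} (M : Matrix (Fin m) (Fin l) ℝ) (t : ℝ) (a : Vec l) :
    mv M (t • a) = t • mv M a := by
  ext i; simp [mv, Matrix.mulVec_smul]

lemma mv_sub {m l : ℕ} (M : Matrix (Fin m) (Fin l) ℝ) (a b : Vec l) :
    mv M (a - b) = mv M a - mv M b := by
  have : a - b = a + (-1 : ℝ) • b := by module
  rw [this, mv_add, mv_smul]; module

lemma mv_mv {m l k : ℕ} (M : Matrix (Fin m) (Fin l) ℝ) (N : Matrix (Fin l) (Fin k) ℝ)
    (v : Vec k) : mv M (mv N v) = mv (M * N) v := by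
  simp [mv, Matrix.mulVec_mulVec]

lemma inner_mv {m l : ℕ} (M : Matrix (Fin m) (Fin l) ℝ) (u : Vec m) (v : Vec l) :
    ⟪u, mv M v⟫ = ⟪mv Mᵀ u, v⟫ := by
  simp only [mv, PiLp.inner_apply, RCLike.inner_apply, conj_trivial]
  calc ∑ i, (M *ᵥ v) i * u i = u ⬝ᵥ (M *ᵥ v) := by simp [dotProduct, mul_comm]
    _ = (u ᵥ* M) ⬝ᵥ v := Matrix.dotProduct_mulVec u M v
    _ = (Mᵀ *ᵥ u) ⬝ᵥ v := by rw [← Matrix.mulVec_transpose]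
    _ = ∑ i, v i * (Mᵀ *ᵥ u) i := by simp [dotProduct, mul_comm]

lemma coeff_zero_of_quadratic {c s : ℝ} (hs : 0 ≤ s) (h : ∀ t : ℝ, 0 ≤ t * c + t ^ 2 * s) :
    c = 0 := by
  have hs1 : 0 < s + 1 := by linarith
  have h2 := h (-(c / (s + 1)))
  have e : (-(c / (s + 1))) * c + (-(c / (s + 1))) ^ 2 * s = -(c ^ 2 / (s + 1) ^ 2) := by
    field_simp; ring
  rw [e] at h2
  have : c ^ 2 / (s + 1) ^ 2 ≤ 0 := by linarith
  have h3 : c ^ 2 ≤ 0 := by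
    have := mul_le_mul_of_nonneg_right this (le_of_lt (pow_pos hs1 2))
    rwa [div_mul_cancel₀, zero_mul] at this
    positivity
  nlinarith [sq_nonneg c]

lemma triple_sq {m : ℕ} (a b c : Vec m) :
    ‖a + b + c‖ ^ 2 ≤ 3 * (‖a‖ ^ 2 + ‖b‖ ^ 2 + ‖c‖ ^ 2) := by
  have h1 : ‖a + b + c‖ ≤ ‖a‖ + ‖b‖ + ‖c‖ := norm_add₃_le
  nlinarith [norm_nonneg (a + b + c), norm_nonneg a, norm_nonneg b, norm_nonneg c,
    sq_nonneg (‖a‖ - ‖b‖), sq_nonneg (‖a‖ - ‖c‖), sq_nonneg (‖b‖ - ‖c‖)]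

lemma toEuclideanLin_eq_mv {m : ℕ} (M : Matrix (Fin m) (Fin m) ℝ) (v : Vec m) :
    Matrix.toEuclideanLin M v = mv M v := rfl

lemma rayleigh_le {m : ℕ} {M : Matrix (Fin m) (Fin m) ℝ} (hM : M.IsHermitian) {lam : ℝ}
    (hl : IsLargestEigenvalue M lam) (v : Vec m) : ⟪mv M v, v⟫ ≤ lam * ‖v‖ ^ 2 := by
  by_cases hv : v = 0
  · simp [hv, mv]
  haveI : Nontrivial (Vec m) := nontrivial_of_ne v 0 hv
  set T : Vec m →ₗ[ℝ] Vec m := Matrix.toEuclideanLin M with hT_def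
  have hT : T.IsSymmetric := Matrix.isHermitian_iff_isSymmetric.mp hM
  set c : ℝ := ⨆ x : { x : Vec m // x ≠ 0 }, RCLike.re ⟪T x, (x : Vec m)⟫ / ‖(x : Vec m)‖ ^ 2
    with hc_def
  have hev := hT.hasEigenvalue_iSup_of_finiteDimensional
  obtain ⟨w, hw⟩ := Module.End.HasEigenvalue.exists_hasEigenvector hev
  have hweq : M.mulVec w = c • w := by
    have := congrArg WithLp.ofLp hw.apply_eq_smul
    simpa [hT_def, toEuclideanLin_eq_mv, mv, hc_def] using this
  have hclam : c ≤ lam := hl.2 c ⟨w, fun h0 => hw.2 (by simpa using congrArg (WithLp.toLp 2) h0), hweq⟩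
  set T' : Vec m →L[ℝ] Vec m := LinearMap.toContinuousLinearMap T
  have hbdd : BddAbove (Set.range fun x : { x : Vec m // x ≠ 0 } =>
      RCLike.re ⟪T x, (x : Vec m)⟫ / ‖(x : Vec m)‖ ^ 2) := by
    refine ⟨‖T'‖, ?_⟩
    rintro r ⟨x, rfl⟩
    have hx : (0:ℝ) < ‖(x : Vec m)‖ ^ 2 := by
      exact pow_pos (norm_pos_iff.mpr x.2) 2
    rw [div_le_iff₀ hx]
    have h1 : ⟪T x, (x : Vec m)⟫ ≤ ‖T (x : Vec m)‖ * ‖(x : Vec m)‖ := real_inner_le_norm _ _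
    have h2 : ‖T (x : Vec m)‖ ≤ ‖T'‖ * ‖(x : Vec m)‖ := T'.le_opNorm _
    simp only [RCLike.re_to_real]
    nlinarith [norm_nonneg (x : Vec m)]
  have hle : ⟪T v, v⟫ / ‖v‖ ^ 2 ≤ c := by
    have := le_ciSup hbdd ⟨v, hv⟩
    simpa [hc_def] using this
  have hvpos : (0:ℝ) < ‖v‖ ^ 2 := pow_pos (norm_pos_iff.mpr hv) 2
  rw [div_le_iff₀ hvpos] at hle
  calc ⟪mv M v, v⟫ = ⟪T v, v⟫ := by rw [toEuclideanLin_eq_mv]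
    _ ≤ c * ‖v‖ ^ 2 := hle
    _ ≤ lam * ‖v‖ ^ 2 := by nlinarith

lemma rayleigh_ge {m : ℕ} {M : Matrix (Fin m) (Fin m) ℝ} (hM : M.IsHermitian) {lam : ℝ}
    (hl : IsSmallestEigenvalue M lam) (v : Vec m) : lam * ‖v‖ ^ 2 ≤ ⟪mv M v, v⟫ := by
  by_cases hv : v = 0
  · simp [hv, mv]
  haveI : Nontrivial (Vec m) := nontrivial_of_ne v 0 hv
  set T : Vec m →ₗ[ℝ] Vec m := Matrix.toEuclideanLin M with hT_def
  have hT : T.IsSymmetric := Matrix.isHermitian_iff_isSymmetric.mp hM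
  set c : ℝ := ⨅ x : { x : Vec m // x ≠ 0 }, RCLike.re ⟪T x, (x : Vec m)⟫ / ‖(x : Vec m)‖ ^ 2
    with hc_def
  have hev := hT.hasEigenvalue_iInf_of_finiteDimensional
  obtain ⟨w, hw⟩ := Module.End.HasEigenvalue.exists_hasEigenvector hev
  have hweq : M.mulVec w = c • w := by
    have := congrArg WithLp.ofLp hw.apply_eq_smul
    simpa [hT_def, toEuclideanLin_eq_mv, mv, hc_def] using this
  have hclam : lam ≤ c := hl.2 c ⟨w, fun h0 => hw.2 (by simpa using congrArg (WithLp.toLp 2) h0), hweq⟩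
  set T' : Vec m →L[ℝ] Vec m := LinearMap.toContinuousLinearMap T
  have hbdd : BddBelow (Set.range fun x : { x : Vec m // x ≠ 0 } =>
      RCLike.re ⟪T x, (x : Vec m)⟫ / ‖(x : Vec m)‖ ^ 2) := by
    refine ⟨-‖T'‖, ?_⟩
    rintro r ⟨x, rfl⟩
    have hx : (0:ℝ) < ‖(x : Vec m)‖ ^ 2 := by
      exact pow_pos (norm_pos_iff.mpr x.2) 2
    rw [le_div_iff₀ hx]
    have h1 : -(‖T (x : Vec m)‖ * ‖(x : Vec m)‖) ≤ ⟪T x, (x : Vec m)⟫ := by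
      have h3 := abs_real_inner_le_norm (T (x : Vec m)) (x : Vec m)
      have h4 := neg_abs_le (⟪T (x : Vec m), (x : Vec m)⟫ : ℝ)
      linarith
    have h2 : ‖T (x : Vec m)‖ ≤ ‖T'‖ * ‖(x : Vec m)‖ := T'.le_opNorm _
    simp only [RCLike.re_to_real]
    nlinarith [norm_nonneg (x : Vec m)]
  have hle : c ≤ ⟪T v, v⟫ / ‖v‖ ^ 2 := by
    have := ciInf_le hbdd ⟨v, hv⟩
    simpa [hc_def] using this
  have hvpos : (0:ℝ) < ‖v‖ ^ 2 := pow_pos (norm_pos_iff.mpr hv) 2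
  rw [le_div_iff₀ hvpos] at hle
  calc lam * ‖v‖ ^ 2 ≤ c * ‖v‖ ^ 2 := by nlinarith
    _ ≤ ⟪T v, v⟫ := hle
    _ = ⟪mv M v, v⟫ := by rw [toEuclideanLin_eq_mv]

lemma descent_lemma {m : ℕ} {f : Vec m → ℝ} {L : ℝ} (hd : Differentiable ℝ f)
    (hl : ∀ a b : Vec m, ‖gradient f a - gradient f b‖ ≤ L * ‖a - b‖) (a b : Vec m) :
    f b ≤ f a + ⟪gradient f a, b - a⟫ + L / 2 * ‖b - a‖ ^ 2 := by
  set v := b - a with hv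
  have hcont : Continuous (gradient f) := by
    have : LipschitzWith (Real.toNNReal L) (gradient f) := by
      apply LipschitzWith.of_dist_le_mul
      intro pp qq
      rw [dist_eq_norm, dist_eq_norm]
      refine (hl pp qq).trans ?_
      have : L ≤ (Real.toNNReal L : ℝ) := Real.le_coe_toNNReal L
      nlinarith [norm_nonneg (pp - qq)]
    exact this.continuous
  have hφ : ∀ t : ℝ, HasDerivAt (fun s : ℝ => f (a + s • v))
      ⟪gradient f (a + t • v), v⟫ t := by
    intro t
    have h1 : HasGradientAt f (gradient f (a + t • v)) (a + t • v) :=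
      (hd _).hasGradientAt
    have h2 : HasFDerivAt f (InnerProductSpace.toDual ℝ _ (gradient f (a + t • v)))
        (a + t • v) := hasGradientAt_iff_hasFDerivAt.mp h1
    have h3 : HasDerivAt (fun s : ℝ => a + s • v) v t := by
      simpa using ((hasDerivAt_id t).smul_const v).const_add a
    have := h2.comp_hasDerivAt t h3
    rw [InnerProductSpace.toDual_apply_apply] at this
    exact this
  have hcont2 : Continuous fun t : ℝ => ⟪gradient f (a + t • v), v⟫ := by
    apply Continuous.inner
    · exact hcont.comp (by continuity)
    · exact continuous_const
  have key : f (a + (1:ℝ) • v) - f (a + (0:ℝ) • v) =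
      ∫ t in (0:ℝ)..1, ⟪gradient f (a + t • v), v⟫ :=
    (intervalIntegral.integral_eq_sub_of_hasDerivAt (fun t _ => hφ t)
      (hcont2.intervalIntegrable 0 1)).symm
  have hmono : (∫ t in (0:ℝ)..1, ⟪gradient f (a + t • v), v⟫) ≤
      ∫ t in (0:ℝ)..1, (⟪gradient f a, v⟫ + L * t * ‖v‖ ^ 2) := by
    apply intervalIntegral.integral_mono_on (by norm_num)
      (hcont2.intervalIntegrable 0 1)
      ((by fun_prop : Continuous fun t : ℝ =>
        ⟪gradient f a, v⟫ + L * t * ‖v‖ ^ 2).intervalIntegrable 0 1)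
    intro t ht
    obtain ⟨ht0, ht1⟩ := ht
    have hdiff := hl (a + t • v) a
    have hnorm : ‖a + t • v - a‖ = t * ‖v‖ := by
      have : a + t • v - a = t • v := by abel
      rw [this, norm_smul, Real.norm_eq_abs, abs_of_nonneg ht0]
    rw [hnorm] at hdiff
    have hsplit : ⟪gradient f (a + t • v), v⟫ =
        ⟪gradient f a, v⟫ + ⟪gradient f (a + t • v) - gradient f a, v⟫ := by
      rw [inner_sub_left]; ring
    rw [hsplit]
    have hcs : ⟪gradient f (a + t • v) - gradient f a, v⟫ ≤
        ‖gradient f (a + t • v) - gradient f a‖ * ‖v‖ := real_inner_le_norm _ _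
    nlinarith [norm_nonneg v]
  have heval : (∫ t in (0:ℝ)..1, (⟪gradient f a, v⟫ + L * t * ‖v‖ ^ 2)) =
      ⟪gradient f a, v⟫ + L / 2 * ‖v‖ ^ 2 := by
    have h1 : (fun t : ℝ => ⟪gradient f a, v⟫ + L * t * ‖v‖ ^ 2) =
        fun t : ℝ => ⟪gradient f a, v⟫ + (L * ‖v‖ ^ 2) * t := by
      funext t; ring
    have hcont4 : Continuous fun t : ℝ => L * ‖v‖ ^ 2 * t := by fun_prop
    rw [h1, intervalIntegral.integral_add (intervalIntegrable_const)
      (hcont4.intervalIntegrable 0 1),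
      intervalIntegral.integral_const, intervalIntegral.integral_const_mul,
      integral_id]
    simp; ring
  have e0 : a + (0:ℝ) • v = a := by simp
  have e1 : a + (1:ℝ) • v = b := by simp [hv]
  rw [e0, e1] at key
  linarith [key, hmono, heval.le, heval.ge]

lemma hbar_expand {p q n : ℕ} (g : Vec p → Vec q → ℝ) (h : Vec q → ℝ)
    (A : Matrix (Fin n) (Fin p) ℝ) (B : Matrix (Fin n) (Fin q) ℝ) (β Ly : ℝ)
    (x1 : Vec p) (y0 y1 : Vec q) (γ0 : Vec n) (d : Vec q) (t : ℝ) :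
    hbar g h A B β Ly x1 y0 γ0 (y1 + t • d) =
      hbar g h A B β Ly x1 y0 γ0 y1 +
        t * ⟪mv Bᵀ γ0 + β • mv Bᵀ (mv A x1 + mv B y1) + Ly • (y1 - y0) +
              grady g x1 y0 + gradient h y0, d⟫ +
        t ^ 2 * (Ly / 2 * ‖d‖ ^ 2 + β / 2 * ‖mv B d‖ ^ 2) := by
  unfold hbar
  rw [mv_add, mv_smul]
  have e2 : y1 + t • d - y0 = (y1 - y0) + t • d := by abel
  have e3 : mv A x1 + (mv B y1 + t • mv B d) = (mv A x1 + mv B y1) + t • mv B d := by abel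
  rw [e2, e3, norm_add_sq_real, norm_add_sq_real]
  simp only [inner_add_right, inner_add_left, real_inner_smul_right, real_inner_smul_left,
    norm_smul, Real.norm_eq_abs, mul_pow, sq_abs, inner_mv]
  have hc1 : ⟪(y1 - y0 : Vec q), d⟫ = ⟪d, (y1 - y0 : Vec q)⟫ := real_inner_comm _ _
  have hc2 : ⟪grady g x1 y0, d⟫ = ⟪d, grady g x1 y0⟫ := real_inner_comm _ _
  have hc3 : ⟪gradient h y0, d⟫ = ⟪d, gradient h y0⟫ := real_inner_comm _ _
  rw [hc1, hc2, hc3] at *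
  ring_nf
  rw [mv_add, inner_add_left, hc2, hc3]
  ring

set_option maxHeartbeats 2000000 in
theorem statement7 {p q n : ℕ}
    (A : Matrix (Fin n) (Fin p) ℝ) (B : Matrix (Fin n) (Fin q) ℝ)
    (g : Vec p → Vec q → ℝ) (f : Vec p → ℝ) (h : Vec q → ℝ)
    (Lg Lh Lx Ly β Cm LA lamB : ℝ)
    (x : ℕ → Vec p) (y : ℕ → Vec q) (γ : ℕ → Vec n)
    -- Assumption 1
    (hh : LipschitzDifferentiable h Lh)
    (hg : LipschitzDifferentiable2 g Lg)
    (hlb : ∃ c : ℝ, ∀ (x' : Vec p) (y' : Vec q),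
      mv A x' + mv B y' = 0 → c ≤ g x' y' + f x' + h y')
    (hcoercive : ∀ (u : ℕ → Vec p) (v : ℕ → Vec q),
      (∀ k, mv A (u k) + mv B (v k) = 0) →
      Tendsto (fun k => ‖v k‖) atTop atTop →
      Tendsto (fun k => g (u k) (v k) + f (u k) + h (v k)) atTop atTop)
    (hrank : B.rank = q)
    (himg : Set.range (mv A) ⊆ Set.range (mv B))
    -- extreme eigenvalues of AᵀA and BᵀB
    (hLA : IsLargestEigenvalue (Aᵀ * A) LA)
    (hlamB : IsSmallestEigenvalue (Bᵀ * B) lamB)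
    (hLxpos : 0 < Lx) (hLypos : 0 < Ly) (hβpos : 0 < β)
    -- Algorithm 1 iterations
    (hxmin : ∀ (k : ℕ) (x' : Vec p),
      fbar f g A B β Lx (x k) (y k) (γ k) (x (k + 1)) ≤
        fbar f g A B β Lx (x k) (y k) (γ k) x')
    (hymin : ∀ (k : ℕ) (y' : Vec q),
      hbar g h A B β Ly (x (k + 1)) (y k) (γ k) (y (k + 1)) ≤
        hbar g h A B β Ly (x (k + 1)) (y k) (γ k) y')
    (hγup : ∀ k : ℕ, γ (k + 1) = γ k + β • (mv A (x (k + 1)) + mv B (y (k + 1)))) :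
    ∀ k : ℕ, 1 ≤ k →
      (Lagr β g f h A B (x k) (y k) (γ k) + Cm * ‖y k - y (k - 1)‖ ^ 2) -
        (Lagr β g f h A B (x (k + 1)) (y (k + 1)) (γ (k + 1)) +
          Cm * ‖y (k + 1) - y k‖ ^ 2) ≥
      ((2 * Ly - (Lg + Lh)) / 2 - 3 * Ly ^ 2 / (β * lamB) - Cm) * ‖y (k + 1) - y k‖ ^ 2 +
        (Cm - 3 * ((Lg + Lh) ^ 2 + Ly ^ 2) / (β * lamB)) * ‖y k - y (k - 1)‖ ^ 2 +
        ((Lx - Lg - β * LA) / 2 - 3 * (Lg + Lh) ^ 2 / (β * lamB)) * ‖x (k + 1) - x k‖ ^ 2 := by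
  intro k hk
  obtain ⟨j, rfl⟩ : ∃ j, k = j + 1 := ⟨k - 1, (Nat.succ_pred_eq_of_pos hk).symm⟩
  simp only [Nat.add_sub_cancel]
  -- basic facts
  have hq : Nonempty (Fin q) := by
    obtain ⟨v, hv, -⟩ := hlamB.1
    by_contra hne
    exact hv (funext fun i => absurd ⟨i⟩ hne)
  obtain ⟨i0⟩ := hq
  have hLh0 : 0 ≤ Lh := by
    have h1 := hh.2 (EuclideanSpace.single i0 (1:ℝ)) 0
    have h2 : ‖(EuclideanSpace.single i0 (1:ℝ)) - 0‖ = 1 := by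
      simp [EuclideanSpace.norm_single]
    rw [h2, mul_one] at h1
    exact le_trans (norm_nonneg _) h1
  have hLg0 : 0 ≤ Lg := by
    have h1 := hg.2.2 0 0 (EuclideanSpace.single i0 (1:ℝ)) 0
    have h2 : Real.sqrt (‖(0:Vec p) - 0‖ ^ 2 + ‖(EuclideanSpace.single i0 (1:ℝ)) - 0‖ ^ 2)
        = 1 := by
      simp [EuclideanSpace.norm_single]
    rw [h2, mul_one] at h1
    exact le_trans (Real.sqrt_nonneg _) h1
  have hBB : (Bᵀ * B).IsHermitian := by simpa using Matrix.isHermitian_conjTranspose_mul_self B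
  have hAA : (Aᵀ * A).IsHermitian := by simpa using Matrix.isHermitian_conjTranspose_mul_self A
  -- lamB > 0
  have hlam0 : 0 < lamB := by
    obtain ⟨v, hv, hveq⟩ := hlamB.1
    have hv' : (WithLp.toLp 2 v : Vec q) ≠ 0 := by simpa using hv
    have hker : mv B (WithLp.toLp 2 v : Vec q) ≠ 0 := by
      intro h0
      apply hv
      have hrk : B.rank = Module.finrank ℝ (LinearMap.range B.mulVecLin) := rfl
      have hrn := LinearMap.finrank_range_add_finrank_ker (B.mulVecLin)
      have hdim : Module.finrank ℝ (Fin q → ℝ) = q := by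
        rw [Module.finrank_fintype_fun_eq_card ℝ, Fintype.card_fin]
      have hker0 : Module.finrank ℝ (LinearMap.ker B.mulVecLin) = 0 := by
        rw [hdim] at hrn
        rw [← hrk] at hrn
        omega
      have hbot : LinearMap.ker B.mulVecLin = ⊥ := Submodule.finrank_eq_zero.mp hker0
      have hmem : v ∈ LinearMap.ker B.mulVecLin := by
        simp only [LinearMap.mem_ker, Matrix.mulVecLin_apply]
        simpa [mv] using h0
      rw [hbot] at hmem
      simpa using hmem
    have h2 : (⟪mv B (WithLp.toLp 2 v : Vec q), mv B (WithLp.toLp 2 v : Vec q)⟫ : ℝ) =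
        ⟪mv (Bᵀ * B) (WithLp.toLp 2 v : Vec q), (WithLp.toLp 2 v : Vec q)⟫ := by
      rw [inner_mv, mv_mv]
    have h3 : mv (Bᵀ * B) (WithLp.toLp 2 v : Vec q) = lamB • (WithLp.toLp 2 v : Vec q) := by simp [mv, hveq]
    rw [h3, real_inner_smul_left] at h2
    rw [real_inner_self_eq_norm_sq, real_inner_self_eq_norm_sq] at h2
    have h4 : 0 < ‖mv B (WithLp.toLp 2 v : Vec q)‖ ^ 2 := pow_pos (norm_pos_iff.mpr hker) 2
    have h5 : 0 < ‖(WithLp.toLp 2 v : Vec q)‖ ^ 2 := pow_pos (norm_pos_iff.mpr hv') 2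
    nlinarith
  -- Lipschitz of partial gradients
  have hgx_lip : ∀ (yy : Vec q) (a b : Vec p),
      ‖gradient (fun x' => g x' yy) a - gradient (fun x' => g x' yy) b‖ ≤ Lg * ‖a - b‖ := by
    intro yy a b
    have h1 := hg.2.2 a b yy yy
    have h2 : ‖gradx g a yy - gradx g b yy‖ ≤
        Real.sqrt (‖gradx g a yy - gradx g b yy‖ ^ 2 + ‖grady g a yy - grady g b yy‖ ^ 2) := by
      rw [Real.le_sqrt (norm_nonneg _) (by positivity)]
      nlinarith [sq_nonneg ‖grady g a yy - grady g b yy‖]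
    have h3 : Real.sqrt (‖a - b‖ ^ 2 + ‖yy - yy‖ ^ 2) = ‖a - b‖ := by
      simp [Real.sqrt_sq, norm_nonneg]
    rw [h3] at h1
    exact le_trans h2 h1
  have hgy_lip : ∀ (xx : Vec p) (a b : Vec q),
      ‖gradient (g xx) a - gradient (g xx) b‖ ≤ Lg * ‖a - b‖ := by
    intro xx a b
    have h1 := hg.2.2 xx xx a b
    have h2 : ‖grady g xx a - grady g xx b‖ ≤
        Real.sqrt (‖gradx g xx a - gradx g xx b‖ ^ 2 + ‖grady g xx a - grady g xx b‖ ^ 2) := by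
      rw [Real.le_sqrt (norm_nonneg _) (by positivity)]
      nlinarith [sq_nonneg ‖gradx g xx a - gradx g xx b‖]
    have h3 : Real.sqrt (‖xx - xx‖ ^ 2 + ‖a - b‖ ^ 2) = ‖a - b‖ := by
      simp [Real.sqrt_sq, norm_nonneg]
    rw [h3] at h1
    exact le_trans h2 h1
  -- descent instances
  have dgx : ∀ (yy : Vec q) (a b : Vec p),
      g b yy ≤ g a yy + ⟪gradx g a yy, b - a⟫ + Lg / 2 * ‖b - a‖ ^ 2 :=
    fun yy a b => descent_lemma (hg.1 yy) (hgx_lip yy) a b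
  have dgy : ∀ (xx : Vec p) (a b : Vec q),
      g xx b ≤ g xx a + ⟪grady g xx a, b - a⟫ + Lg / 2 * ‖b - a‖ ^ 2 :=
    fun xx a b => descent_lemma (hg.2.1 xx) (hgy_lip xx) a b
  have dh : ∀ (a b : Vec q),
      h b ≤ h a + ⟪gradient h a, b - a⟫ + Lh / 2 * ‖b - a‖ ^ 2 :=
    fun a b => descent_lemma hh.1 hh.2 a b
  -- stationarity and strong minimality of the y-update
  have hkey : ∀ k' : ℕ,
      mv Bᵀ (γ (k' + 1)) = -(Ly • (y (k' + 1) - y k') + grady g (x (k' + 1)) (y k') +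
        gradient h (y k')) ∧
      hbar g h A B β Ly (x (k' + 1)) (y k') (γ k') (y k') ≥
        hbar g h A B β Ly (x (k' + 1)) (y k') (γ k') (y (k' + 1)) +
          Ly / 2 * ‖y (k' + 1) - y k'‖ ^ 2 := by
    intro k'
    have hmin : ∀ (d : Vec q) (t : ℝ), 0 ≤
        t * ⟪mv Bᵀ (γ k') + β • mv Bᵀ (mv A (x (k' + 1)) + mv B (y (k' + 1))) +
              Ly • (y (k' + 1) - y k') + grady g (x (k' + 1)) (y k') + gradient h (y k'), d⟫ +
          t ^ 2 * (Ly / 2 * ‖d‖ ^ 2 + β / 2 * ‖mv B d‖ ^ 2) := by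
      intro d t
      have h1 := hymin k' (y (k' + 1) + t • d)
      rw [hbar_expand] at h1
      linarith
    have hvec : mv Bᵀ (γ k') + β • mv Bᵀ (mv A (x (k' + 1)) + mv B (y (k' + 1))) +
        Ly • (y (k' + 1) - y k') + grady g (x (k' + 1)) (y k') + gradient h (y k') = 0 := by
      set W : Vec q := mv Bᵀ (γ k') + β • mv Bᵀ (mv A (x (k' + 1)) + mv B (y (k' + 1))) +
        Ly • (y (k' + 1) - y k') + grady g (x (k' + 1)) (y k') + gradient h (y k') with hW
      have hs : 0 ≤ Ly / 2 * ‖W‖ ^ 2 + β / 2 * ‖mv B W‖ ^ 2 :=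
        add_nonneg (mul_nonneg (by linarith) (sq_nonneg _))
          (mul_nonneg (by linarith) (sq_nonneg _))
      have hc := coeff_zero_of_quadratic hs (hmin W)
      exact inner_self_eq_zero.mp hc
    constructor
    · rw [hγup k', mv_add, mv_smul]
      apply eq_neg_of_add_eq_zero_left
      rw [← hvec]
      abel
    · have h1 : y k' = y (k' + 1) + (1 : ℝ) • (y k' - y (k' + 1)) := by module
      have h2 := hbar_expand g h A B β Ly (x (k' + 1)) (y k') (y (k' + 1)) (γ k')
        (y k' - y (k' + 1)) 1
      rw [hvec, inner_zero_left] at h2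
      have h3 : hbar g h A B β Ly (x (k' + 1)) (y k') (γ k') (y k') =
          hbar g h A B β Ly (x (k' + 1)) (y k') (γ k')
            (y (k' + 1) + (1 : ℝ) • (y k' - y (k' + 1))) := by rw [← h1]
      rw [h3, h2]
      have h4 : ‖y k' - y (k' + 1)‖ = ‖y (k' + 1) - y k'‖ := norm_sub_rev _ _
      have h5 : 0 ≤ β / 2 * ‖mv B (y k' - y (k' + 1))‖ ^ 2 :=
        mul_nonneg (by linarith) (sq_nonneg _)
      rw [h4] at *
      nlinarith [sq_nonneg ‖y (k' + 1) - y k'‖]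
  -- Step A: x-update descent
  have hstepA : Lagr β g f h A B (x (j + 1 + 1)) (y (j + 1)) (γ (j + 1)) ≤
      Lagr β g f h A B (x (j + 1)) (y (j + 1)) (γ (j + 1)) -
        (Lx - Lg - β * LA) / 2 * ‖x (j + 1 + 1) - x (j + 1)‖ ^ 2 := by
    have hminx := hxmin (j + 1) (x (j + 1))
    simp only [fbar, sub_self, norm_zero, inner_zero_left, ne_eq, OfNat.ofNat_ne_zero,
      not_false_eq_true, zero_pow, mul_zero, add_zero] at hminx
    have hquad : β / 2 * ‖mv A (x (j + 1 + 1)) + mv B (y (j + 1))‖ ^ 2 =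
        β / 2 * ‖mv A (x (j + 1)) + mv B (y (j + 1))‖ ^ 2 +
        β * ⟪mv Aᵀ (mv A (x (j + 1)) + mv B (y (j + 1))), x (j + 1 + 1) - x (j + 1)⟫ +
        β / 2 * ⟪mv (Aᵀ * A) (x (j + 1 + 1) - x (j + 1)), x (j + 1 + 1) - x (j + 1)⟫ := by
      have e1 : mv A (x (j + 1 + 1)) + mv B (y (j + 1)) =
          (mv A (x (j + 1)) + mv B (y (j + 1))) + mv A (x (j + 1 + 1) - x (j + 1)) := by
        rw [mv_sub]; abel
      rw [e1, norm_add_sq_real, inner_mv]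
      have e2 : ‖mv A (x (j + 1 + 1) - x (j + 1))‖ ^ 2 =
          ⟪mv (Aᵀ * A) (x (j + 1 + 1) - x (j + 1)), x (j + 1 + 1) - x (j + 1)⟫ := by
        rw [← real_inner_self_eq_norm_sq, inner_mv, mv_mv]
      rw [e2]; ring
    have hray : ⟪mv (Aᵀ * A) (x (j + 1 + 1) - x (j + 1)), x (j + 1 + 1) - x (j + 1)⟫ ≤
        LA * ‖x (j + 1 + 1) - x (j + 1)‖ ^ 2 := rayleigh_le hAA hLA _
    have hray' : β / 2 * ⟪mv (Aᵀ * A) (x (j + 1 + 1) - x (j + 1)), x (j + 1 + 1) - x (j + 1)⟫ ≤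
        β / 2 * (LA * ‖x (j + 1 + 1) - x (j + 1)‖ ^ 2) :=
      mul_le_mul_of_nonneg_left hray (by positivity)
    have hdg := dgx (y (j + 1)) (x (j + 1)) (x (j + 1 + 1))
    have hsplit : ⟪x (j + 1 + 1) - x (j + 1),
        gradx g (x (j + 1)) (y (j + 1)) + β • mv Aᵀ (mv A (x (j + 1)) + mv B (y (j + 1)))⟫ =
        ⟪gradx g (x (j + 1)) (y (j + 1)), x (j + 1 + 1) - x (j + 1)⟫ +
        β * ⟪mv Aᵀ (mv A (x (j + 1)) + mv B (y (j + 1))), x (j + 1 + 1) - x (j + 1)⟫ := by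
      rw [inner_add_right, real_inner_smul_right,
        real_inner_comm (x (j + 1 + 1) - x (j + 1)) (gradx g (x (j + 1)) (y (j + 1))),
        real_inner_comm (x (j + 1 + 1) - x (j + 1))
          (mv Aᵀ (mv A (x (j + 1)) + mv B (y (j + 1))))]
    rw [hsplit] at hminx
    simp only [Lagr, inner_add_right]
    linarith [hminx, hdg, hquad, hray']
  -- Step B: y-update descent
  have hstepB : Lagr β g f h A B (x (j + 1 + 1)) (y (j + 1 + 1)) (γ (j + 1)) ≤
      Lagr β g f h A B (x (j + 1 + 1)) (y (j + 1)) (γ (j + 1)) -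
        (2 * Ly - (Lg + Lh)) / 2 * ‖y (j + 1 + 1) - y (j + 1)‖ ^ 2 := by
    have hsB := (hkey (j + 1)).2
    simp only [hbar, sub_self, norm_zero, inner_zero_left, ne_eq, OfNat.ofNat_ne_zero,
      not_false_eq_true, zero_pow, mul_zero, add_zero, inner_add_right] at hsB
    have hdgy := dgy (x (j + 1 + 1)) (y (j + 1)) (y (j + 1 + 1))
    have hdh := dh (y (j + 1)) (y (j + 1 + 1))
    have hc1 : ⟪grady g (x (j + 1 + 1)) (y (j + 1)), y (j + 1 + 1) - y (j + 1)⟫ =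
        ⟪y (j + 1 + 1) - y (j + 1), grady g (x (j + 1 + 1)) (y (j + 1))⟫ :=
      real_inner_comm _ _
    have hc2 : ⟪gradient h (y (j + 1)), y (j + 1 + 1) - y (j + 1)⟫ =
        ⟪y (j + 1 + 1) - y (j + 1), gradient h (y (j + 1))⟫ := real_inner_comm _ _
    simp only [Lagr, inner_add_right]
    linarith [hsB, hdgy, hdh, hc1, hc2]
  -- Step C: dual update
  have hstepC : Lagr β g f h A B (x (j + 1 + 1)) (y (j + 1 + 1)) (γ (j + 1 + 1)) =
      Lagr β g f h A B (x (j + 1 + 1)) (y (j + 1 + 1)) (γ (j + 1)) +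
        β * ‖mv A (x (j + 1 + 1)) + mv B (y (j + 1 + 1))‖ ^ 2 := by
    simp only [Lagr]
    rw [hγup (j + 1), inner_add_left, real_inner_smul_left, real_inner_self_eq_norm_sq]
    ring
  -- Step D: dual bound
  have hstepD : β * ‖mv A (x (j + 1 + 1)) + mv B (y (j + 1 + 1))‖ ^ 2 ≤
      3 * Ly ^ 2 / (β * lamB) * ‖y (j + 1 + 1) - y (j + 1)‖ ^ 2 +
        3 * ((Lg + Lh) ^ 2 + Ly ^ 2) / (β * lamB) * ‖y (j + 1) - y j‖ ^ 2 +
        3 * (Lg + Lh) ^ 2 / (β * lamB) * ‖x (j + 1 + 1) - x (j + 1)‖ ^ 2 := by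
    obtain ⟨z, hz⟩ := himg ⟨x (j + 1 + 1), rfl⟩
    have hmem : mv A (x (j + 1 + 1)) + mv B (y (j + 1 + 1)) = mv B (z + y (j + 1 + 1)) := by
      rw [mv_add, hz]
    have hspec : lamB * ‖mv A (x (j + 1 + 1)) + mv B (y (j + 1 + 1))‖ ^ 2 ≤
        ‖mv Bᵀ (mv A (x (j + 1 + 1)) + mv B (y (j + 1 + 1)))‖ ^ 2 := by
      rw [hmem, mv_mv]
      set z' : Vec q := z + y (j + 1 + 1) with hz'
      have h1 : ‖mv B z'‖ ^ 2 = ⟪mv (Bᵀ * B) z', z'⟫ := by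
        rw [← real_inner_self_eq_norm_sq, inner_mv, mv_mv]
      rw [h1]
      have h2 := rayleigh_ge hBB hlamB z'
      have h3 : ⟪mv (Bᵀ * B) z', z'⟫ ≤ ‖mv (Bᵀ * B) z'‖ * ‖z'‖ := real_inner_le_norm _ _
      by_cases hzz : z' = 0
      · simp [hzz, mv, Matrix.mulVec_zero]
      · have hb : 0 < ‖z'‖ := norm_pos_iff.mpr hzz
        have hstep : lamB * ‖z'‖ ≤ ‖mv (Bᵀ * B) z'‖ := by
          nlinarith [le_trans h2 h3, hb, mul_pos hb hb]
        have hm1 := mul_le_mul_of_nonneg_left h3 hlam0.le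
        have hm2 := mul_le_mul_of_nonneg_left hstep (norm_nonneg (mv (Bᵀ * B) z'))
        nlinarith [hm1, hm2]
    have hd1 := (hkey (j + 1)).1
    have hd0 := (hkey j).1
    have hBt : β • mv Bᵀ (mv A (x (j + 1 + 1)) + mv B (y (j + 1 + 1))) =
        (-Ly) • (y (j + 1 + 1) - y (j + 1)) + Ly • (y (j + 1) - y j) +
          ((grady g (x (j + 1)) (y j) - grady g (x (j + 1 + 1)) (y (j + 1))) +
           (gradient h (y j) - gradient h (y (j + 1)))) := by
      have e1 : β • mv Bᵀ (mv A (x (j + 1 + 1)) + mv B (y (j + 1 + 1))) =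
          mv Bᵀ (γ (j + 1 + 1)) - mv Bᵀ (γ (j + 1)) := by
        rw [hγup (j + 1), mv_add Bᵀ (γ (j + 1)), mv_smul]; module
      rw [e1, hd1, hd0]
      module
    have hBtn := congrArg (fun w : Vec q => ‖w‖ ^ 2) hBt
    have hnorm1 : ‖β • mv Bᵀ (mv A (x (j + 1 + 1)) + mv B (y (j + 1 + 1)))‖ ^ 2 =
        β ^ 2 * ‖mv Bᵀ (mv A (x (j + 1 + 1)) + mv B (y (j + 1 + 1)))‖ ^ 2 := by
      rw [norm_smul, Real.norm_eq_abs, mul_pow, sq_abs]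
    have htr := triple_sq ((-Ly) • (y (j + 1 + 1) - y (j + 1))) (Ly • (y (j + 1) - y j))
      ((grady g (x (j + 1)) (y j) - grady g (x (j + 1 + 1)) (y (j + 1))) +
       (gradient h (y j) - gradient h (y (j + 1))))
    have ha : ‖(-Ly) • (y (j + 1 + 1) - y (j + 1))‖ ^ 2 = Ly ^ 2 * ‖y (j + 1 + 1) - y (j + 1)‖ ^ 2 := by
      rw [norm_smul, Real.norm_eq_abs, mul_pow, sq_abs]; ring
    have hb2 : ‖Ly • (y (j + 1) - y j)‖ ^ 2 = Ly ^ 2 * ‖y (j + 1) - y j‖ ^ 2 := by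
      rw [norm_smul, Real.norm_eq_abs, mul_pow, sq_abs]
    -- bound on the gradient difference vector
    have hgd : ‖grady g (x (j + 1)) (y j) - grady g (x (j + 1 + 1)) (y (j + 1))‖ ≤
        Lg * Real.sqrt (‖x (j + 1 + 1) - x (j + 1)‖ ^ 2 + ‖y (j + 1) - y j‖ ^ 2) := by
      have h1 := hg.2.2 (x (j + 1)) (x (j + 1 + 1)) (y j) (y (j + 1))
      rw [norm_sub_rev (x (j + 1)) (x (j + 1 + 1)), norm_sub_rev (y j) (y (j + 1))] at h1
      refine le_trans ?_ h1
      rw [Real.le_sqrt (norm_nonneg _) (by positivity)]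
      nlinarith [sq_nonneg ‖gradx g (x (j + 1)) (y j) - gradx g (x (j + 1 + 1)) (y (j + 1))‖]
    have hhd : ‖gradient h (y j) - gradient h (y (j + 1))‖ ≤ Lh * ‖y (j + 1) - y j‖ := by
      have h1 := hh.2 (y j) (y (j + 1))
      rwa [norm_sub_rev (y j) (y (j + 1))] at h1
    have hd0sqrt : ‖y (j + 1) - y j‖ ≤
        Real.sqrt (‖x (j + 1 + 1) - x (j + 1)‖ ^ 2 + ‖y (j + 1) - y j‖ ^ 2) := by
      rw [Real.le_sqrt (norm_nonneg _) (by positivity)]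
      nlinarith [sq_nonneg ‖x (j + 1 + 1) - x (j + 1)‖]
    have hsum_norm : ‖(grady g (x (j + 1)) (y j) - grady g (x (j + 1 + 1)) (y (j + 1))) +
        (gradient h (y j) - gradient h (y (j + 1)))‖ ≤
        (Lg + Lh) * Real.sqrt (‖x (j + 1 + 1) - x (j + 1)‖ ^ 2 + ‖y (j + 1) - y j‖ ^ 2) := by
      refine le_trans (norm_add_le _ _) ?_
      have h1 : Lh * ‖y (j + 1) - y j‖ ≤ Lh *
          Real.sqrt (‖x (j + 1 + 1) - x (j + 1)‖ ^ 2 + ‖y (j + 1) - y j‖ ^ 2) :=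
        mul_le_mul_of_nonneg_left hd0sqrt hLh0
      have h2 := le_trans hhd h1
      linarith [hgd, h2]
    have hc3 : ‖(grady g (x (j + 1)) (y j) - grady g (x (j + 1 + 1)) (y (j + 1))) +
        (gradient h (y j) - gradient h (y (j + 1)))‖ ^ 2 ≤
        (Lg + Lh) ^ 2 * (‖x (j + 1 + 1) - x (j + 1)‖ ^ 2 + ‖y (j + 1) - y j‖ ^ 2) := by
      have h6 := pow_le_pow_left₀ (norm_nonneg _) hsum_norm 2
      rwa [mul_pow, Real.sq_sqrt (by positivity)] at h6
    have hfin : β ^ 2 * ‖mv Bᵀ (mv A (x (j + 1 + 1)) + mv B (y (j + 1 + 1)))‖ ^ 2 ≤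
        3 * (Ly ^ 2 * ‖y (j + 1 + 1) - y (j + 1)‖ ^ 2 + Ly ^ 2 * ‖y (j + 1) - y j‖ ^ 2 +
          (Lg + Lh) ^ 2 * (‖x (j + 1 + 1) - x (j + 1)‖ ^ 2 + ‖y (j + 1) - y j‖ ^ 2)) := by
      rw [← hnorm1, hBtn]
      calc ‖_ + _ + _‖ ^ 2 ≤ _ := htr
        _ ≤ _ := by rw [ha, hb2]; linarith [hc3]
    have hcomb : β ^ 2 * (lamB * ‖mv A (x (j + 1 + 1)) + mv B (y (j + 1 + 1))‖ ^ 2) ≤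
        3 * (Ly ^ 2 * ‖y (j + 1 + 1) - y (j + 1)‖ ^ 2 + Ly ^ 2 * ‖y (j + 1) - y j‖ ^ 2 +
          (Lg + Lh) ^ 2 * (‖x (j + 1 + 1) - x (j + 1)‖ ^ 2 + ‖y (j + 1) - y j‖ ^ 2)) :=
      le_trans (mul_le_mul_of_nonneg_left hspec (sq_nonneg β)) hfin
    have hrw : 3 * Ly ^ 2 / (β * lamB) * ‖y (j + 1 + 1) - y (j + 1)‖ ^ 2 +
        3 * ((Lg + Lh) ^ 2 + Ly ^ 2) / (β * lamB) * ‖y (j + 1) - y j‖ ^ 2 +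
        3 * (Lg + Lh) ^ 2 / (β * lamB) * ‖x (j + 1 + 1) - x (j + 1)‖ ^ 2 =
        (3 * Ly ^ 2 * ‖y (j + 1 + 1) - y (j + 1)‖ ^ 2 +
          3 * ((Lg + Lh) ^ 2 + Ly ^ 2) * ‖y (j + 1) - y j‖ ^ 2 +
          3 * (Lg + Lh) ^ 2 * ‖x (j + 1 + 1) - x (j + 1)‖ ^ 2) / (β * lamB) := by
      ring
    rw [hrw, le_div_iff₀ (mul_pos hβpos hlam0)]
    nlinarith [hcomb]
  linarith [hstepA, hstepB, hstepC, hstepD]
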